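/- For every real h > 1, |∫_{−1}^{1} x·(2(h−x)(1−x²))^{−1/2} dx| ≤ 1/√(h−1) + 1/√h. -/

import Mathlib

open MeasureTheory intervalIntegral

-- integrability and value of ∫_0^1 (1-x)^(-1/2)
lemma aux_int1 : IntervalIntegrable (fun x : ℝ => (1 - x) ^ (-(1/2) : ℝ)) volume 0 1 := by
  have := (intervalIntegrable_rpow' (a := 0) (b := 1) (r := -(1/2)) (by norm_num)).comp_sub_left 1
  simpa using this.symm

lemma aux_val1 : (∫ x in (0:ℝ)..1, (1 - x) ^ (-(1/2) : ℝ)) = 2 := by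
  have h1 : (∫ x in (0:ℝ)..1, (1 - x) ^ (-(1/2) : ℝ))
      = ∫ x in (1-(1:ℝ))..(1-(0:ℝ)), x ^ (-(1/2) : ℝ) :=
    integral_comp_sub_left (fun x : ℝ => x ^ (-(1/2) : ℝ)) 1
  rw [h1]
  norm_num
  rw [integral_rpow (Or.inl (by norm_num))]
  rw [Real.zero_rpow (by norm_num), Real.one_rpow]
  norm_num

lemma aux_int2 : IntervalIntegrable (fun x : ℝ => (1 + x) ^ (-(1/2) : ℝ)) volume (-1) 0 := by
  have := (intervalIntegrable_rpow' (a := 0) (b := 1) (r := -(1/2)) (by norm_num)).comp_add_left 1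
  simpa using this

lemma aux_val2 : (∫ x in (-1:ℝ)..0, (1 + x) ^ (-(1/2) : ℝ)) = 2 := by
  have h1 : (∫ x in (-1:ℝ)..0, (1 + x) ^ (-(1/2) : ℝ))
      = ∫ x in (1+(-1:ℝ))..(1+(0:ℝ)), x ^ (-(1/2) : ℝ) :=
    integral_comp_add_left (fun x : ℝ => x ^ (-(1/2) : ℝ)) 1
  rw [h1]
  norm_num
  rw [integral_rpow (Or.inl (by norm_num))]
  rw [Real.zero_rpow (by norm_num), Real.one_rpow]
  norm_num


lemma aux_rpow_eq {y : ℝ} (hy : 0 ≤ y) : y ^ (-(1/2) : ℝ) = (Real.sqrt y)⁻¹ := by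
  rw [Real.sqrt_eq_rpow, ← Real.rpow_neg hy]

lemma bound_pos (h : ℝ) (hh : 1 < h) {x : ℝ} (hx0 : 0 ≤ x) (hx1 : x ≤ 1) :
    |x * (Real.sqrt (2 * (h - x) * (1 - x ^ 2)))⁻¹|
      ≤ (2 * Real.sqrt (h - 1))⁻¹ * (1 - x) ^ (-(1/2) : ℝ) := by
  have h1x : (0:ℝ) ≤ 1 - x := by linarith
  rw [aux_rpow_eq h1x]
  have hh1 : (0:ℝ) < h - 1 := by linarith
  rcases eq_or_lt_of_le hx1 with rfl | hx1'
  · simp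
  · have hq : 0 < 2 * (h - x) * (1 - x ^ 2) := by
      nlinarith [mul_pos (show (0:ℝ) < 1 + x by linarith) (show (0:ℝ) < 1 - x by linarith)]
    have hs : 0 < Real.sqrt (2 * (h - x) * (1 - x ^ 2)) := Real.sqrt_pos.2 hq
    have hA : 0 < 2 * Real.sqrt (h - 1) * Real.sqrt (1 - x) := by
      have := Real.sqrt_pos.2 hh1
      have := Real.sqrt_pos.2 (show (0:ℝ) < 1 - x by linarith)
      positivity
    rw [abs_of_nonneg (by positivity)]
    rw [← mul_inv, ← div_eq_mul_inv, ← one_div, div_le_div_iff₀ hs hA]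
    rw [one_mul]
    have key : x * (2 * Real.sqrt (h - 1) * Real.sqrt (1 - x))
        = Real.sqrt (4 * x ^ 2 * ((h - 1) * (1 - x))) := by
      rw [Real.sqrt_mul (by positivity), Real.sqrt_mul (by norm_num : (0:ℝ) ≤ 4),
        Real.sqrt_mul hh1.le, Real.sqrt_sq hx0, show Real.sqrt 4 = 2 by
          rw [show (4:ℝ) = 2^2 by norm_num, Real.sqrt_sq (by norm_num)]]
      ring
    rw [key]
    apply Real.sqrt_le_sqrt
    nlinarith [mul_nonneg (mul_nonneg (sq_nonneg (1-x)) hh1.le) (by linarith : (0:ℝ) ≤ 1+2*x),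
      mul_nonneg (sq_nonneg (1-x)) (by linarith : (0:ℝ) ≤ 1+x)]

lemma bound_neg (h : ℝ) (hh : 1 < h) {x : ℝ} (hx0 : -1 ≤ x) (hx1 : x ≤ 0) :
    |x * (Real.sqrt (2 * (h - x) * (1 - x ^ 2)))⁻¹|
      ≤ (2 * Real.sqrt h)⁻¹ * (1 + x) ^ (-(1/2) : ℝ) := by
  have h1x : (0:ℝ) ≤ 1 + x := by linarith
  rw [aux_rpow_eq h1x]
  have hh0 : (0:ℝ) < h := by linarith
  rcases eq_or_lt_of_le hx0 with rfl | hx0'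
  · norm_num
  · have hq : 0 < 2 * (h - x) * (1 - x ^ 2) := by
      nlinarith [mul_pos (show (0:ℝ) < 1 + x by linarith) (show (0:ℝ) < 1 - x by linarith)]
    have hs : 0 < Real.sqrt (2 * (h - x) * (1 - x ^ 2)) := Real.sqrt_pos.2 hq
    have hA : 0 < 2 * Real.sqrt h * Real.sqrt (1 + x) := by
      have := Real.sqrt_pos.2 hh0
      have := Real.sqrt_pos.2 (show (0:ℝ) < 1 + x by linarith)
      positivity
    rw [abs_mul, abs_of_pos (inv_pos.2 hs), abs_of_nonpos hx1]
    rw [← mul_inv, ← div_eq_mul_inv, ← one_div, div_le_div_iff₀ hs hA, one_mul]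
    have key : -x * (2 * Real.sqrt h * Real.sqrt (1 + x))
        = Real.sqrt (4 * x ^ 2 * (h * (1 + x))) := by
      rw [Real.sqrt_mul (by positivity), Real.sqrt_mul hh0.le,
        Real.sqrt_mul (by norm_num : (0:ℝ) ≤ 4)]
      rw [Real.sqrt_sq_eq_abs, abs_of_nonpos hx1, show Real.sqrt 4 = 2 by
        rw [show (4:ℝ) = 2^2 by norm_num, Real.sqrt_sq (by norm_num)]]
      ring
    rw [key]
    apply Real.sqrt_le_sqrt
    nlinarith [mul_nonneg (mul_nonneg hh0.le h1x) (mul_nonneg (neg_nonneg.2 hx1) (neg_nonneg.2 hx1)),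
      mul_nonneg (mul_nonneg hh0.le h1x) (sub_nonneg.2 (by linarith : x ≤ (1:ℝ)/2))]

/-- For every real `h > 1`,
`|∫_{−1}^{1} x·(2(h−x)(1−x²))^{−1/2} dx| ≤ 1/√(h−1) + 1/√h`. -/
theorem I_integral_bound (h : ℝ) (hh : 1 < h) :
    |∫ x in (-1 : ℝ)..1, x * (Real.sqrt (2 * (h - x) * (1 - x ^ 2)))⁻¹|
      ≤ 1 / Real.sqrt (h - 1) + 1 / Real.sqrt h := by
  have hh1 : (0:ℝ) < h - 1 := by linarith
  have hh0 : (0:ℝ) < h := by linarith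
  set F : ℝ → ℝ := fun x => x * (Real.sqrt (2 * (h - x) * (1 - x ^ 2)))⁻¹ with hF
  have hmeas : Measurable F := by
    apply measurable_id.mul
    exact ((Real.continuous_sqrt.comp
      (by continuity : Continuous fun x : ℝ => 2 * (h - x) * (1 - x ^ 2))).measurable).inv
  have hg1 : IntervalIntegrable
      (fun x : ℝ => (2 * Real.sqrt (h - 1))⁻¹ * (1 - x) ^ (-(1/2) : ℝ)) volume 0 1 :=
    aux_int1.const_mul _
  have hg2 : IntervalIntegrable
      (fun x : ℝ => (2 * Real.sqrt h)⁻¹ * (1 + x) ^ (-(1/2) : ℝ)) volume (-1) 0 :=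
    aux_int2.const_mul _
  have hF1 : IntervalIntegrable F volume 0 1 := by
    apply hg1.mono_fun hmeas.aestronglyMeasurable
    filter_upwards [ae_restrict_mem measurableSet_uIoc] with x hx
    rw [Set.uIoc_of_le (by norm_num : (0:ℝ) ≤ 1)] at hx
    have hb := bound_pos h hh hx.1.le hx.2
    rw [Real.norm_eq_abs, Real.norm_eq_abs]
    refine hb.trans (le_abs_self _)
  have hF2 : IntervalIntegrable F volume (-1) 0 := by
    apply hg2.mono_fun hmeas.aestronglyMeasurable
    filter_upwards [ae_restrict_mem measurableSet_uIoc] with x hx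
    rw [Set.uIoc_of_le (by norm_num : (-1:ℝ) ≤ 0)] at hx
    have hb := bound_neg h hh hx.1.le hx.2
    rw [Real.norm_eq_abs, Real.norm_eq_abs]
    refine hb.trans (le_abs_self _)
  have key1 : |∫ x in (0:ℝ)..1, F x| ≤ 1 / Real.sqrt (h - 1) := by
    calc |∫ x in (0:ℝ)..1, F x| ≤ ∫ x in (0:ℝ)..1, |F x| :=
          abs_integral_le_integral_abs (by norm_num)
      _ ≤ ∫ x in (0:ℝ)..1, (2 * Real.sqrt (h - 1))⁻¹ * (1 - x) ^ (-(1/2) : ℝ) :=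
          integral_mono_on (by norm_num) hF1.abs hg1
            (fun x hx => bound_pos h hh hx.1 hx.2)
      _ = (2 * Real.sqrt (h - 1))⁻¹ * 2 := by rw [intervalIntegral.integral_const_mul, aux_val1]
      _ = 1 / Real.sqrt (h - 1) := by
          have : Real.sqrt (h - 1) ≠ 0 := ne_of_gt (Real.sqrt_pos.2 hh1)
          field_simp
  have key2 : |∫ x in (-1:ℝ)..0, F x| ≤ 1 / Real.sqrt h := by
    calc |∫ x in (-1:ℝ)..0, F x| ≤ ∫ x in (-1:ℝ)..0, |F x| :=
          abs_integral_le_integral_abs (by norm_num)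
      _ ≤ ∫ x in (-1:ℝ)..0, (2 * Real.sqrt h)⁻¹ * (1 + x) ^ (-(1/2) : ℝ) :=
          integral_mono_on (by norm_num) hF2.abs hg2
            (fun x hx => bound_neg h hh hx.1 hx.2)
      _ = (2 * Real.sqrt h)⁻¹ * 2 := by rw [intervalIntegral.integral_const_mul, aux_val2]
      _ = 1 / Real.sqrt h := by
          have : Real.sqrt h ≠ 0 := ne_of_gt (Real.sqrt_pos.2 hh0)
          field_simp
  have hsplit : (∫ x in (-1:ℝ)..1, F x) = (∫ x in (-1:ℝ)..0, F x) + ∫ x in (0:ℝ)..1, F x :=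
    (integral_add_adjacent_intervals hF2 hF1).symm
  calc |∫ x in (-1:ℝ)..1, F x|
      = |(∫ x in (-1:ℝ)..0, F x) + ∫ x in (0:ℝ)..1, F x| := by rw [hsplit]
    _ ≤ |∫ x in (-1:ℝ)..0, F x| + |∫ x in (0:ℝ)..1, F x| := abs_add_le _ _
    _ ≤ 1 / Real.sqrt (h - 1) + 1 / Real.sqrt h := by linarith
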